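/- Let E be a real vector space and Γ : E ⇉ E a set-valued map with convex values. If for every finite subset A of the domain of Γ, the intersection [A] ∩ ⋂{Γ(x) : x ∈ A} is nonempty, then Γ is a KKM map: for every finite subset A of the domain of Γ, the convex hull [A] is contained in ⋃{Γ(x) : x ∈ A}. -/

import Mathlib

/-- (FIP) ⇒ (KKM) for convex-valued maps. -/
theorem fip_implies_convex_kkm {E : Type*} [AddCommGroup E] [Module ℝ E]
    (Γ : E → Set E)
    (hconv : ∀ x, Convex ℝ (Γ x))
    (hFIP : ∀ A : Finset E, A.Nonempty → (↑A : Set E) ⊆ {x | (Γ x).Nonempty} →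
      (convexHull ℝ (↑A : Set E) ∩ ⋂ x ∈ A, Γ x).Nonempty) :
    ∀ A : Finset E, (↑A : Set E) ⊆ {x | (Γ x).Nonempty} →
      convexHull ℝ (↑A : Set E) ⊆ ⋃ x ∈ A, Γ x := by
  classical
  intro A
  induction A using Finset.strongInduction with
  | _ A ih =>
  intro hdom y hy
  rcases Finset.eq_empty_or_nonempty A with rfl | hAne
  · simp at hy
  rw [Finset.convexHull_eq] at hy
  obtain ⟨lam, hlam0, hlam1, hyc⟩ := hy
  rw [Finset.centerMass_eq_of_sum_1 _ _ hlam1] at hyc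
  simp only [id_eq] at hyc
  by_cases h0 : ∃ x0 ∈ A, lam x0 = 0
  · -- y lies in the convex hull of A.erase x0
    obtain ⟨x0, hx0A, hx00⟩ := h0
    have hsub : (A.erase x0 : Set E) ⊆ {x | (Γ x).Nonempty} :=
      fun x hx => hdom (Finset.erase_subset _ _ hx)
    have hsum' : ∑ x ∈ A.erase x0, lam x = 1 := by
      rw [Finset.sum_erase _ hx00]; exact hlam1
    have hy' : y ∈ convexHull ℝ (↑(A.erase x0) : Set E) := by
      have : (A.erase x0).centerMass lam id = y := by
        rw [Finset.centerMass_eq_of_sum_1 _ _ hsum']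
        rw [← hyc]
        exact Finset.sum_erase _ (by simp [hx00])
      rw [← this]
      exact Finset.centerMass_mem_convexHull _
        (fun i hi => hlam0 i (Finset.erase_subset _ _ hi)) (by rw [hsum']; norm_num)
        (fun i hi => hi)
    have := ih (A.erase x0) (Finset.erase_ssubset hx0A) hsub hy'
    obtain ⟨x1, hx1, hyx1⟩ := Set.mem_iUnion₂.1 this
    exact Set.mem_iUnion₂.2 ⟨x1, Finset.erase_subset _ _ hx1, hyx1⟩
  · push_neg at h0
    have hlampos : ∀ x ∈ A, 0 < lam x := fun x hx =>
      lt_of_le_of_ne (hlam0 x hx) (Ne.symm (h0 x hx))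
    obtain ⟨z, hz1, hz2⟩ := hFIP A hAne hdom
    have hzΓ : ∀ x ∈ A, z ∈ Γ x := fun x hx => Set.mem_iInter₂.1 hz2 x hx
    rw [Finset.convexHull_eq] at hz1
    obtain ⟨mu, hmu0, hmu1, hzc⟩ := hz1
    rw [Finset.centerMass_eq_of_sum_1 _ _ hmu1] at hzc
    simp only [id_eq] at hzc
    by_cases hc : ∃ x ∈ A, lam x < mu x
    · -- move along the line from z through y to hit a face
      set B := A.filter (fun x => lam x < mu x) with hB
      have hBne : B.Nonempty := by
        obtain ⟨x, hx, hlt⟩ := hc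
        exact ⟨x, Finset.mem_filter.2 ⟨hx, hlt⟩⟩
      obtain ⟨x0, hx0B, hx0min⟩ :=
        Finset.exists_min_image B (fun x => lam x / (mu x - lam x)) hBne
      have hx0A : x0 ∈ A := (Finset.mem_filter.1 hx0B).1
      have hx0lt : lam x0 < mu x0 := (Finset.mem_filter.1 hx0B).2
      set t := lam x0 / (mu x0 - lam x0) with ht
      have htpos : 0 < t :=
        div_pos (hlampos x0 hx0A) (sub_pos.2 hx0lt)
      set nu := fun x => (1 + t) * lam x - t * mu x with hnu
      have hnu0 : ∀ x ∈ A, 0 ≤ nu x := by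
        intro x hx
        by_cases hlt : lam x < mu x
        · have hxB : x ∈ B := Finset.mem_filter.2 ⟨hx, hlt⟩
          have := hx0min x hxB
          have hpos : 0 < mu x - lam x := sub_pos.2 hlt
          have : t * (mu x - lam x) ≤ lam x := by
            rw [ht]
            calc lam x0 / (mu x0 - lam x0) * (mu x - lam x)
                ≤ lam x / (mu x - lam x) * (mu x - lam x) := by
                  apply mul_le_mul_of_nonneg_right (hx0min x hxB) hpos.le
              _ = lam x := by field_simp
          simp only [hnu]; nlinarith
        · push_neg at hlt
          have : 0 ≤ lam x - mu x := sub_nonneg.2 hlt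
          simp only [hnu]; nlinarith [hlam0 x hx]
      have hnux0 : nu x0 = 0 := by
        have hne : t * (mu x0 - lam x0) = lam x0 :=
          div_mul_cancel₀ _ (by linarith)
        have h2 : nu x0 = lam x0 - t * (mu x0 - lam x0) := by
          simp only [hnu]; ring
        rw [h2, hne, sub_self]
      have hnusum : ∑ x ∈ A, nu x = 1 := by
        simp only [hnu, Finset.sum_sub_distrib, ← Finset.mul_sum, hlam1, hmu1]
        ring
      set w := ∑ x ∈ A, nu x • x with hw
      have hw' : w ∈ convexHull ℝ (↑(A.erase x0) : Set E) := by
        have hsum' : ∑ x ∈ A.erase x0, nu x = 1 := by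
          rw [Finset.sum_erase _ hnux0]; exact hnusum
        have hcm : (A.erase x0).centerMass nu id = w := by
          rw [Finset.centerMass_eq_of_sum_1 _ _ hsum', hw]
          exact Finset.sum_erase _ (by simp [hnux0])
        rw [← hcm]
        exact Finset.centerMass_mem_convexHull _
          (fun i hi => hnu0 i (Finset.erase_subset _ _ hi)) (by rw [hsum']; norm_num)
          (fun i hi => hi)
      have hsub : (A.erase x0 : Set E) ⊆ {x | (Γ x).Nonempty} :=
        fun x hx => hdom (Finset.erase_subset _ _ hx)
      obtain ⟨x1, hx1, hwx1⟩ := Set.mem_iUnion₂.1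
        (ih (A.erase x0) (Finset.erase_ssubset hx0A) hsub hw')
      have hx1A : x1 ∈ A := Finset.erase_subset _ _ hx1
      -- y is a convex combination of w and z
      have hywz : (1 / (1 + t)) • w + (t / (1 + t)) • z = y := by
        have h1t : (1 : ℝ) + t ≠ 0 := by positivity
        rw [hw, ← hzc, ← hyc, Finset.smul_sum, Finset.smul_sum,
          ← Finset.sum_add_distrib]
        apply Finset.sum_congr rfl
        intro x hx
        rw [smul_smul, smul_smul, ← add_smul]
        congr 1
        simp only [hnu]
        field_simp
        ring
      have : y ∈ Γ x1 := by
        rw [← hywz]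
        exact hconv x1 hwx1 (hzΓ x1 hx1A)
          (by positivity) (by positivity)
          (by field_simp)
      exact Set.mem_iUnion₂.2 ⟨x1, hx1A, this⟩
    · -- mu ≤ lam everywhere, hence mu = lam and y = z
      push_neg at hc
      have heq : ∀ x ∈ A, lam x - mu x = 0 := by
        rw [← Finset.sum_eq_zero_iff_of_nonneg
          (fun x hx => sub_nonneg.2 (hc x hx))]
        rw [Finset.sum_sub_distrib, hlam1, hmu1]; ring
      have hyz : y = z := by
        rw [← hyc, ← hzc]
        apply Finset.sum_congr rfl
        intro x hx
        have := heq x hx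
        have : lam x = mu x := by linarith
        rw [this]
      obtain ⟨x, hx⟩ := hAne
      exact Set.mem_iUnion₂.2 ⟨x, hx, hyz ▸ hzΓ x hx⟩
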